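/- Let d ≥ 1 and let μ_1, …, μ_d : [0,T] → (0,1] be continuous with Σ_{i=1}^d μ_i(t) = 1 for every t ∈ [0,T]; let m_i(t) := min_{0 ≤ s ≤ t} μ_i(s). Let p > 0 satisfy p ≤ exp( −2 − log( max_j μ_j(0) ) + max_j μ_j(0) ), and define V(t) := −log p − Σ_{i=1}^d μ_i(t) log m_i(t) + Σ_{i=1}^d m_i(t) − 1. Fix 0 < T* ≤ T and assume Σ_{i=1}^d μ_i(0) log μ_i(0) − max_{1 ≤ i ≤ d} log m_i(T*) > 1. Then V(t) ≥ 0 for all t ∈ [0,T], and V(t) > V(0) = −Σ_{i=1}^d μ_i(0) log( p μ_i(0) ) for every t ∈ [T*, T]. (Example 6.3: the strategy additively generated by the entropy functional with running minimum is strong arbitrage relative to the market over every horizon [0,t] with T* ≤ t ≤ T, even though its Gamma functional is nonincreasing.) -/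

import Mathlib

/-- The running minimum of `f` on `[0, t]`. -/
noncomputable def runMin (f : ℝ → ℝ) (t : ℝ) : ℝ :=
  sInf (f '' Set.Icc (0:ℝ) t)

/-- Example 6.3: the strategy additively generated by the entropy functional
with running minimum, `G(t, μ, μ_*) = −log p − Σ_i μ_i(t) log μ_{*i}(t)`, with
value process `V = G + Γ^G` where `Γ^G(t) = Σ_i μ_{*i}(t) − 1`, is strong
arbitrage relative to the market over every horizon `[0,t]` with `T* ≤ t ≤ T`,
even though its Gamma functional is nonincreasing. -/
theorem entropy_with_running_minimum_arbitrage
    (T Tstar : ℝ) (hTstar : 0 < Tstar) (hTstarT : Tstar ≤ T)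
    (d : ℕ) (hd : 1 ≤ d) (w : Fin d → ℝ → ℝ)
    (hw_cont : ∀ i, ContinuousOn (w i) (Set.Icc (0:ℝ) T))
    (hw_mem : ∀ i, ∀ t ∈ Set.Icc (0:ℝ) T, w i t ∈ Set.Ioc (0:ℝ) 1)
    (hw_sum : ∀ t ∈ Set.Icc (0:ℝ) T, ∑ i, w i t = 1)
    (m : Fin d → ℝ → ℝ) (hm : ∀ i t, m i t = runMin (w i) t)
    (p : ℝ) (hp_pos : 0 < p)
    (hp : p ≤ Real.exp (-2 - Real.log (⨆ j, w j 0) + (⨆ j, w j 0)))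
    (V : ℝ → ℝ)
    (hV : ∀ t, V t = -Real.log p - (∑ i, w i t * Real.log (m i t))
      + (∑ i, m i t) - 1)
    (harb : (∑ i, w i 0 * Real.log (w i 0)) - (⨆ i, Real.log (m i Tstar)) > 1) :
    (∀ t ∈ Set.Icc (0:ℝ) T, 0 ≤ V t) ∧
      V 0 = -∑ i, w i 0 * Real.log (p * w i 0) ∧
      ∀ t ∈ Set.Icc Tstar T, V 0 < V t := by
  haveI : Nonempty (Fin d) := ⟨⟨0, by omega⟩⟩
  have h0T : (0:ℝ) ∈ Set.Icc (0:ℝ) T := ⟨le_rfl, le_trans hTstar.le hTstarT⟩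
  have hTsT : Tstar ∈ Set.Icc (0:ℝ) T := ⟨hTstar.le, hTstarT⟩
  -- basic facts about the running minimum
  have hfacts : ∀ i, ∀ t ∈ Set.Icc (0:ℝ) T,
      m i t ∈ Set.Ioc (0:ℝ) 1 ∧ ∀ s ∈ Set.Icc (0:ℝ) t, m i t ≤ w i s := by
    intro i t ht
    have hsub : Set.Icc (0:ℝ) t ⊆ Set.Icc (0:ℝ) T := Set.Icc_subset_Icc le_rfl ht.2
    have hne : (w i '' Set.Icc (0:ℝ) t).Nonempty :=
      ⟨w i 0, ⟨0, ⟨le_rfl, ht.1⟩, rfl⟩⟩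
    have hcomp : IsCompact (w i '' Set.Icc (0:ℝ) t) :=
      isCompact_Icc.image_of_continuousOn ((hw_cont i).mono hsub)
    have hbdd : BddBelow (w i '' Set.Icc (0:ℝ) t) := hcomp.bddBelow
    have hinf_mem : sInf (w i '' Set.Icc (0:ℝ) t) ∈ w i '' Set.Icc (0:ℝ) t :=
      hcomp.sInf_mem hne
    obtain ⟨s, hs, hse⟩ := hinf_mem
    constructor
    · rw [hm, runMin, ← hse]
      exact hw_mem i s (hsub hs)
    · intro s' hs'
      rw [hm, runMin]
      exact csInf_le hbdd ⟨s', hs', rfl⟩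
  have hm_pos : ∀ i, ∀ t ∈ Set.Icc (0:ℝ) T, 0 < m i t :=
    fun i t ht => ((hfacts i t ht).1).1
  have hm0 : ∀ i, m i 0 = w i 0 := by
    intro i
    rw [hm, runMin, Set.Icc_self, Set.image_singleton, csInf_singleton]
  have hm_le_w0 : ∀ i, ∀ t ∈ Set.Icc (0:ℝ) T, m i t ≤ w i 0 :=
    fun i t ht => (hfacts i t ht).2 0 ⟨le_rfl, ht.1⟩
  -- monotonicity: m i t ≤ m i Tstar for t ≥ Tstar
  have hmono : ∀ i, ∀ t ∈ Set.Icc Tstar T, m i t ≤ m i Tstar := by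
    intro i t ht
    have htT : t ∈ Set.Icc (0:ℝ) T := ⟨le_trans hTstar.le ht.1, ht.2⟩
    rw [hm i t, hm i Tstar, runMin, runMin]
    have hsub : Set.Icc (0:ℝ) t ⊆ Set.Icc (0:ℝ) T := Set.Icc_subset_Icc le_rfl ht.2
    have hcomp : IsCompact (w i '' Set.Icc (0:ℝ) t) :=
      isCompact_Icc.image_of_continuousOn ((hw_cont i).mono hsub)
    refine csInf_le_csInf hcomp.bddBelow ⟨w i 0, ⟨0, ⟨le_rfl, hTstar.le⟩, rfl⟩⟩ ?_
    exact Set.image_mono (Set.Icc_subset_Icc le_rfl ht.1)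
  -- facts about S = ⨆ j, w j 0
  set S : ℝ := ⨆ j, w j 0 with hSdef
  have hbddS : BddAbove (Set.range fun j => w j 0) := Set.Finite.bddAbove (Set.finite_range _)
  have hS_le : ∀ j, w j 0 ≤ S := fun j => le_ciSup hbddS j
  have hS1 : S ≤ 1 := ciSup_le fun j => (hw_mem j 0 h0T).2
  have hS_pos : 0 < S :=
    lt_of_lt_of_le (hw_mem (Classical.arbitrary _) 0 h0T).1 (hS_le _)
  have hlogp : Real.log p ≤ -2 - Real.log S + S := by
    calc Real.log p ≤ Real.log (Real.exp (-2 - Real.log S + S)) :=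
          Real.log_le_log hp_pos hp
      _ = -2 - Real.log S + S := Real.log_exp _
  -- pointwise bound for nonnegativity
  have hVnonneg : ∀ t ∈ Set.Icc (0:ℝ) T, 0 ≤ V t := by
    intro t ht
    have hsumlog : (∑ i, w i t * Real.log (m i t)) ≤ ∑ i, w i t * Real.log S := by
      apply Finset.sum_le_sum
      intro i _
      have hwt : 0 < w i t := (hw_mem i t ht).1
      have hlog : Real.log (m i t) ≤ Real.log S :=
        Real.log_le_log (hm_pos i t ht) (le_trans (hm_le_w0 i t ht) (hS_le i))
      exact mul_le_mul_of_nonneg_left hlog hwt.le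
    have hsum_eq : (∑ i, w i t * Real.log S) = Real.log S := by
      rw [← Finset.sum_mul, hw_sum t ht, one_mul]
    have hsumm : (0:ℝ) ≤ ∑ i, m i t :=
      Finset.sum_nonneg fun i _ => (hm_pos i t ht).le
    rw [hV]
    rw [hsum_eq] at hsumlog
    linarith
  refine ⟨hVnonneg, ?_, ?_⟩
  · -- value at 0
    have hsumw0 : ∑ i, w i 0 = 1 := hw_sum 0 h0T
    have hsummul : ∑ i, w i 0 * Real.log (p * w i 0)
        = (∑ i, w i 0) * Real.log p + ∑ i, w i 0 * Real.log (w i 0) := by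
      rw [Finset.sum_mul, ← Finset.sum_add_distrib]
      apply Finset.sum_congr rfl
      intro i _
      rw [Real.log_mul hp_pos.ne' (hw_mem i 0 h0T).1.ne']
      ring
    rw [hV, hsummul, hsumw0]
    have hmz : ∀ i, m i 0 = w i 0 := hm0
    simp only [hmz]
    rw [hsumw0]
    ring
  · -- arbitrage
    intro t ht
    have htT : t ∈ Set.Icc (0:ℝ) T := ⟨le_trans hTstar.le ht.1, ht.2⟩
    set M : ℝ := ⨆ i, Real.log (m i Tstar) with hMdef
    have hbddM : BddAbove (Set.range fun i => Real.log (m i Tstar)) :=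
      Set.Finite.bddAbove (Set.finite_range _)
    have hM_le : ∀ i, Real.log (m i Tstar) ≤ M := fun i => le_ciSup hbddM i
    have hsumlog : (∑ i, w i t * Real.log (m i t)) ≤ ∑ i, w i t * M := by
      apply Finset.sum_le_sum
      intro i _
      have hwt : 0 < w i t := (hw_mem i t htT).1
      have hlog : Real.log (m i t) ≤ M :=
        le_trans (Real.log_le_log (hm_pos i t htT) (hmono i t ht)) (hM_le i)
      exact mul_le_mul_of_nonneg_left hlog hwt.le
    have hsum_eq : (∑ i, w i t * M) = M := by
      rw [← Finset.sum_mul, hw_sum t htT, one_mul]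
    have hsumm : (0:ℝ) ≤ ∑ i, m i t :=
      Finset.sum_nonneg fun i _ => (hm_pos i t htT).le
    have hsumw0 : ∑ i, w i 0 = 1 := hw_sum 0 h0T
    have hV0 : V 0 = -Real.log p - (∑ i, w i 0 * Real.log (w i 0)) := by
      rw [hV]
      simp only [hm0]
      rw [hsumw0]
      ring
    rw [hV t, hV0]
    rw [hsum_eq] at hsumlog
    linarith
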